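/- Let v be a unit eigenvector of the Jacobi-type matrix B (with B_{i,i-1} = q_i(L)/√2, B_{i,i+1} = -q_i(R)/√2, B_{0,0} = -q_0(L)/√2, B_{n,n} = q_n(R)/√2, q_x(L) - q_x(R) = √2, q_x(L) ≥ 0 ≥ q_x(R)) with eigenvalue λ, and define a = (1/√2)∑_x v(x)|x⟩⊗(|L⟩-|R⟩) and b = Sa. Then a and b are linearly dependent if and only if λ = -1, in which case v(x) = ±(-1)^x/√(n+1) and b = a. -/

import Mathlib

/-- The shift operator `S` of the CRW on the path `P_{n+1}`, acting on states
`ψ : Fin (n+1) × Fin 2 → ℝ` where the coin index `0` stands for `L` and `1` for `R`. -/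
def crwS (n : ℕ) (ψ : Fin (n + 1) × Fin 2 → ℝ) : Fin (n + 1) × Fin 2 → ℝ :=
  fun p =>
    if p.2 = 0 then
      -- component on |y, L⟩ : comes from |y-1, R⟩, or from |0, L⟩ when y = 0
      if (p.1 : ℕ) = 0 then ψ (0, 0)
      else ψ (⟨(p.1 : ℕ) - 1, Nat.lt_of_le_of_lt (Nat.sub_le _ _) p.1.isLt⟩, 1)
    else
      -- component on |y, R⟩ : comes from |y+1, L⟩, or from |n, R⟩ when y = n
      if h : (p.1 : ℕ) = n then ψ (p.1, 1)
      else ψ (⟨(p.1 : ℕ) + 1, by have := p.1.isLt; omega⟩, 0)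

/-- The coin operator `C` of the CRW on the path `P_{n+1}`, with coins
`C_x = [[p_{x,L}, p_{x,R}], [1 - p_{x,L}, 1 - p_{x,R}]]`. -/
def crwC (n : ℕ) (pL pR : ℕ → ℝ) (ψ : Fin (n + 1) × Fin 2 → ℝ) :
    Fin (n + 1) × Fin 2 → ℝ :=
  fun p =>
    if p.2 = 0 then pL p.1 * ψ (p.1, 0) + pR p.1 * ψ (p.1, 1)
    else (1 - pL p.1) * ψ (p.1, 0) + (1 - pR p.1) * ψ (p.1, 1)

/-- The time evolution operator `U = SC` of the CRW on the path `P_{n+1}`. -/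
def crwU (n : ℕ) (pL pR : ℕ → ℝ) (ψ : Fin (n + 1) × Fin 2 → ℝ) :
    Fin (n + 1) × Fin 2 → ℝ :=
  crwS n (crwC n pL pR ψ)

/-- The Jacobi-type matrix `B` associated to the CRW on the path `P_{n+1}`. -/
noncomputable def jacB (n : ℕ) (qL qR : ℕ → ℝ) : Matrix (Fin (n + 1)) (Fin (n + 1)) ℝ :=
  Matrix.of fun i j =>
    if (j : ℕ) + 1 = (i : ℕ) then qL i / Real.sqrt 2
    else if (i : ℕ) + 1 = (j : ℕ) then -qR i / Real.sqrt 2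
    else if (i : ℕ) = 0 ∧ (j : ℕ) = 0 then -qL 0 / Real.sqrt 2
    else if (i : ℕ) = n ∧ (j : ℕ) = n then qR n / Real.sqrt 2
    else 0

noncomputable def wseq (n : ℕ) (v : Fin (n + 1) → ℝ) : ℕ → ℝ :=
  fun i => if h : i < n + 1 then v ⟨i, h⟩ else 0

lemma wseq_eq (n : ℕ) (v : Fin (n + 1) → ℝ) (i : ℕ) (h : i < n + 1) :
    v ⟨i, h⟩ = wseq n v i := by rw [wseq]; rw [dif_pos h]

lemma wseq_eq' (n : ℕ) (v : Fin (n + 1) → ℝ) (j : Fin (n + 1)) :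
    v j = wseq n v (j : ℕ) := by rw [wseq]; rw [dif_pos j.isLt]

lemma sum_two {N : ℕ} (f : Fin N → ℝ) (j1 j2 : Fin N) (h12 : j1 ≠ j2) (c1 c2 : ℝ)
    (h : ∀ j, f j = (if j = j1 then c1 else 0) + (if j = j2 then c2 else 0)) :
    ∑ j, f j = c1 + c2 := by
  have _ := h12
  calc ∑ j, f j = ∑ j, ((if j = j1 then c1 else 0) + (if j = j2 then c2 else 0)) :=
        Finset.sum_congr rfl (fun j _ => h j)
    _ = c1 + c2 := by
        rw [Finset.sum_add_distrib, Finset.sum_ite_eq' Finset.univ j1 (fun _ => c1),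
          Finset.sum_ite_eq' Finset.univ j2 (fun _ => c2)]
        simp

lemma jacRow0 (n : ℕ) (hn : 1 ≤ n) (qL qR : ℕ → ℝ) (v : Fin (n + 1) → ℝ) :
    (jacB n qL qR).mulVec v ⟨0, by omega⟩ =
      -qL 0 / Real.sqrt 2 * v ⟨0, by omega⟩ + -qR 0 / Real.sqrt 2 * v ⟨1, by omega⟩ := by
  rw [Matrix.mulVec]
  show ∑ j, jacB n qL qR ⟨0, by omega⟩ j * v j = _
  apply sum_two _ ⟨0, by omega⟩ ⟨1, by omega⟩ (by simp [Fin.ext_iff])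
  rintro ⟨jv, hj⟩
  simp only [jacB, Matrix.of_apply, Fin.mk.injEq, Fin.val_mk]
  rcases jv with _ | _ | k
  · norm_num
  · norm_num
  · have h1 : ¬ (k + 2 + 1 = 0) := by omega
    have h2 : ¬ (0 + 1 = k + 2) := by omega
    have h3 : ¬ (k + 2 = 0) := by omega
    have h4 : ¬ ((0 : ℕ) = n) := by omega
    simp [h1, h2, h3, h4]

lemma jacRowMid (n : ℕ) (qL qR : ℕ → ℝ) (v : Fin (n + 1) → ℝ) (i : ℕ)
    (hi0 : 0 < i) (hin : i < n) :
    (jacB n qL qR).mulVec v ⟨i, by omega⟩ =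
      qL i / Real.sqrt 2 * v ⟨i - 1, by omega⟩ + -qR i / Real.sqrt 2 * v ⟨i + 1, by omega⟩ := by
  rw [Matrix.mulVec]
  show ∑ j, jacB n qL qR ⟨i, by omega⟩ j * v j = _
  apply sum_two _ ⟨i - 1, by omega⟩ ⟨i + 1, by omega⟩
    (by simp only [ne_eq, Fin.mk.injEq]; omega)
  rintro ⟨jv, hj⟩
  simp only [jacB, Matrix.of_apply, Fin.mk.injEq, Fin.val_mk]
  by_cases e1 : jv + 1 = i
  · rw [if_pos e1, if_pos (by omega : jv = i - 1), if_neg (by omega : ¬ jv = i + 1), add_zero]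
    exact congrArg (fun z => qL i / Real.sqrt 2 * v z) (by simp only [Fin.mk.injEq]; omega)
  · by_cases e2 : i + 1 = jv
    · rw [if_neg e1, if_pos e2, if_neg (by omega : ¬ jv = i - 1),
        if_pos (by omega : jv = i + 1), zero_add]
      exact congrArg (fun z => -qR i / Real.sqrt 2 * v z) (by simp only [Fin.mk.injEq]; omega)
    · rw [if_neg e1, if_neg e2, if_neg (by omega : ¬ (i = 0 ∧ jv = 0)),
        if_neg (by omega : ¬ (i = n ∧ jv = n)), if_neg (by omega : ¬ jv = i - 1),
        if_neg (by omega : ¬ jv = i + 1), add_zero, zero_mul]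

lemma jacRowN (n : ℕ) (hn : 1 ≤ n) (qL qR : ℕ → ℝ) (v : Fin (n + 1) → ℝ) :
    (jacB n qL qR).mulVec v ⟨n, by omega⟩ =
      qL n / Real.sqrt 2 * v ⟨n - 1, by omega⟩ + qR n / Real.sqrt 2 * v ⟨n, by omega⟩ := by
  rw [Matrix.mulVec]
  show ∑ j, jacB n qL qR ⟨n, by omega⟩ j * v j = _
  apply sum_two _ ⟨n - 1, by omega⟩ ⟨n, by omega⟩
    (by simp only [ne_eq, Fin.mk.injEq]; omega)
  rintro ⟨jv, hj⟩
  simp only [jacB, Matrix.of_apply, Fin.mk.injEq, Fin.val_mk]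
  by_cases e1 : jv + 1 = n
  · rw [if_pos e1, if_pos (by omega : jv = n - 1), if_neg (by omega : ¬ jv = n), add_zero]
    exact congrArg (fun z => qL n / Real.sqrt 2 * v z) (by simp only [Fin.mk.injEq]; omega)
  · by_cases e2 : jv = n
    · rw [if_neg e1, if_neg (by omega : ¬ (n + 1 = jv)), if_neg (by omega : ¬ (n = 0 ∧ jv = 0)),
        if_pos (show True ∧ jv = n from ⟨trivial, e2⟩), if_neg (by omega : ¬ jv = n - 1),
        if_pos e2, zero_add]
      exact congrArg (fun z => qR n / Real.sqrt 2 * v z) (by simp only [Fin.mk.injEq]; omega)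
    · rw [if_neg e1, if_neg (by omega : ¬ (n + 1 = jv)), if_neg (by omega : ¬ (n = 0 ∧ jv = 0)),
        if_neg (show ¬ (True ∧ jv = n) from fun h => e2 h.2), if_neg (by omega : ¬ jv = n - 1),
        if_neg e2, zero_mul, add_zero]

theorem stmt17 (n : ℕ) (hn : 1 ≤ n) (pL pR : ℕ → ℝ) (ν : ℝ)
    (hL : ∀ y ≤ n, 0 < pL y ∧ pL y < 1) (hR : ∀ y ≤ n, 0 < pR y ∧ pR y < 1)
    (hν0 : 0 < |ν|) (hν1 : |ν| < 1) (hiso : ∀ x ≤ n, pL x - pR x = ν)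
    (qL qR : ℕ → ℝ)
    (hqL : ∀ x, qL x = Real.sqrt 2 * (1 - pL x) / (1 - ν))
    (hqR : ∀ x, qR x = -(Real.sqrt 2 * pR x) / (1 - ν))
    (v : Fin (n + 1) → ℝ) (hv : ∑ x, v x ^ 2 = 1) (lam : ℝ)
    (heig : (jacB n qL qR).mulVec v = lam • v)
    (a b : Fin (n + 1) × Fin 2 → ℝ)
    (ha : a = fun p => v p.1 * ((if p.2 = 0 then 1 else -1) / Real.sqrt 2))
    (hb : b = crwS n a) :
    (¬ LinearIndependent ℝ ![a, b] ↔ lam = -1) ∧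
    (lam = -1 →
      ((∀ x : Fin (n + 1), v x = (-1 : ℝ) ^ (x : ℕ) / Real.sqrt (n + 1)) ∨
        (∀ x : Fin (n + 1), v x = -((-1 : ℝ) ^ (x : ℕ) / Real.sqrt (n + 1)))) ∧
      b = a) := by
  have hs2 : (0:ℝ) < Real.sqrt 2 := Real.sqrt_pos.mpr (by norm_num)
  have hs2' : Real.sqrt 2 ≠ 0 := ne_of_gt hs2
  have hνlt : ν < 1 := lt_of_le_of_lt (le_abs_self ν) hν1
  have h1ν : (0:ℝ) < 1 - ν := by linarith
  have h1ν' : (1:ℝ) - ν ≠ 0 := ne_of_gt h1ν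
  set w := wseq n v with hwdef
  have hw : ∀ (i : ℕ) (h : i < n + 1), v ⟨i, h⟩ = w i := fun i h => wseq_eq n v i h
  have hw' : ∀ j : Fin (n + 1), v j = w (j : ℕ) := fun j => wseq_eq' n v j
  have hα : ∀ x, qL x / Real.sqrt 2 = (1 - pL x) / (1 - ν) := by
    intro x; rw [hqL x]; field_simp
  have hβ : ∀ x, qR x / Real.sqrt 2 = -(pR x / (1 - ν)) := by
    intro x; rw [hqR x]; field_simp
  have hsumc : ∀ x, x ≤ n → (1 - pL x) / (1 - ν) + pR x / (1 - ν) = 1 := by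
    intro x hx
    rw [← add_div, div_eq_one_iff_eq h1ν']
    have := hiso x hx; linarith
  have hβpos : ∀ x, x ≤ n → 0 < pR x / (1 - ν) := fun x hx => div_pos (hR x hx).1 h1ν
  have E0 : -((1 - pL 0) / (1 - ν)) * w 0 + (pR 0 / (1 - ν)) * w 1 = lam * w 0 := by
    have h := congrFun heig ⟨0, by omega⟩
    rw [jacRow0 n hn qL qR v] at h
    simp only [Pi.smul_apply, smul_eq_mul] at h
    rw [hw 0 (by omega), hw 1 (by omega), neg_div, neg_div, hα 0, hβ 0] at h
    linear_combination h
  have Emid : ∀ i, 0 < i → i < n →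
      ((1 - pL i) / (1 - ν)) * w (i - 1) + (pR i / (1 - ν)) * w (i + 1) = lam * w i := by
    intro i hi0 hin
    have h := congrFun heig ⟨i, by omega⟩
    rw [jacRowMid n qL qR v i hi0 hin] at h
    simp only [Pi.smul_apply, smul_eq_mul] at h
    rw [hw i (by omega), hw (i - 1) (by omega), hw (i + 1) (by omega), hα i, neg_div, hβ i] at h
    linear_combination h
  have hex : ∃ j : Fin (n + 1), v j ≠ 0 := by
    by_contra hcon
    push_neg at hcon
    rw [Finset.sum_eq_zero (fun x _ => by rw [hcon x]; ring)] at hv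
    norm_num at hv
  have stepEig : lam = -1 → ∀ i, i < n → w (i + 1) = - w i := by
    intro hlam i
    induction i with
    | zero =>
      intro h0
      have h := E0
      rw [hlam] at h
      have hk : (pR 0 / (1 - ν)) * (w 1 + w 0) = 0 := by
        linear_combination h + w 0 * hsumc 0 (by omega)
      have h2 := (mul_eq_zero.mp hk).resolve_left (ne_of_gt (hβpos 0 (by omega)))
      linarith
    | succ k ih =>
      intro hk1
      have hvk := ih (by omega)
      have h := Emid (k + 1) (by omega) (by omega)
      rw [hlam] at h
      simp only [Nat.add_sub_cancel] at h
      have hk : (pR (k + 1) / (1 - ν)) * (w (k + 2) + w (k + 1)) = 0 := by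
        linear_combination h - ((1 - pL (k + 1)) / (1 - ν)) * hvk
          + w (k + 1) * hsumc (k + 1) (by omega)
      have h2 := (mul_eq_zero.mp hk).resolve_left (ne_of_gt (hβpos (k + 1) (by omega)))
      linarith
  have halt : (∀ i, i < n → w (i + 1) = - w i) → ∀ i, i ≤ n → w i = (-1 : ℝ) ^ i * w 0 := by
    intro hstep i
    induction i with
    | zero => intro _; simp
    | succ k ih =>
      intro hk
      rw [hstep k (by omega), ih (by omega)]
      ring
  have hw0ne : (∀ i, i < n → w (i + 1) = - w i) → w 0 ≠ 0 := by
    intro hstep h0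
    obtain ⟨j, hj⟩ := hex
    apply hj
    rw [hw' j, halt hstep (j : ℕ) (Nat.lt_succ_iff.mp j.isLt), h0]
    ring
  have haL : ∀ y : Fin (n + 1), a (y, 0) = w (y : ℕ) / Real.sqrt 2 := by
    intro y
    rw [ha, ← hw' y]
    show v y * ((1 : ℝ) / Real.sqrt 2) = v y / Real.sqrt 2
    ring
  have haR : ∀ y : Fin (n + 1), a (y, 1) = -w (y : ℕ) / Real.sqrt 2 := by
    intro y
    rw [ha, ← hw' y]
    show v y * ((-1 : ℝ) / Real.sqrt 2) = -v y / Real.sqrt 2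
    ring
  have hbL : ∀ (i : ℕ) (h : i < n + 1), b (⟨i, h⟩, 0) =
      if i = 0 then w 0 / Real.sqrt 2 else -w (i - 1) / Real.sqrt 2 := by
    intro i h
    rw [hb]
    by_cases hi : i = 0
    · subst hi
      rw [if_pos rfl]
      show a (0, 0) = w 0 / Real.sqrt 2
      have h2 := haL 0
      simpa using h2
    · rw [if_neg hi]
      show (if (i : ℕ) = 0 then a (0, 0) else a (⟨i - 1, by omega⟩, 1)) = -w (i - 1) / Real.sqrt 2
      rw [if_neg hi]
      have h2 := haR ⟨i - 1, by omega⟩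
      simpa using h2
  have hbR : ∀ (i : ℕ) (h : i < n + 1), b (⟨i, h⟩, 1) =
      if i = n then -w n / Real.sqrt 2 else w (i + 1) / Real.sqrt 2 := by
    intro i h
    rw [hb]
    by_cases hi : i = n
    · rw [if_pos hi]
      show (if h' : (i : ℕ) = n then a (⟨i, h⟩, 1) else a (⟨i + 1, by omega⟩, 0))
        = -w n / Real.sqrt 2
      rw [dif_pos hi]
      have h2 := haR ⟨i, h⟩
      rw [h2]
      simp [hi]
    · rw [if_neg hi]
      show (if h' : (i : ℕ) = n then a (⟨i, h⟩, 1) else a (⟨i + 1, by omega⟩, 0))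
        = w (i + 1) / Real.sqrt 2
      rw [dif_neg hi]
      have h2 := haL ⟨i + 1, by omega⟩
      simpa using h2
  have hba : (∀ i, i < n → w (i + 1) = - w i) → b = a := by
    intro hstep
    funext p
    obtain ⟨y, c⟩ := p
    rcases y with ⟨i, h⟩
    fin_cases c
    · show b (⟨i, h⟩, 0) = a (⟨i, h⟩, 0)
      rw [hbL i h, haL ⟨i, h⟩]
      simp only [Fin.val_mk]
      by_cases hi : i = 0
      · rw [if_pos hi, hi]
      · rw [if_neg hi]
        have h2 := hstep (i - 1) (by omega)
        rw [show i - 1 + 1 = i from by omega] at h2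
        rw [h2]
    · show b (⟨i, h⟩, 1) = a (⟨i, h⟩, 1)
      rw [hbR i h, haR ⟨i, h⟩]
      simp only [Fin.val_mk]
      by_cases hi : i = n
      · rw [if_pos hi, hi]
      · rw [if_neg hi]
        have h2 := hstep i (by omega)
        rw [h2]
  have hdir : ¬ LinearIndependent ℝ ![a, b] → lam = -1 := by
    intro hdep
    rw [LinearIndependent.pair_iff] at hdep
    push_neg at hdep
    obtain ⟨s, t, heq, hst⟩ := hdep
    have EL : ∀ (i : ℕ) (h : i < n + 1),
        s * (w i / Real.sqrt 2)
          + t * (if i = 0 then w 0 / Real.sqrt 2 else -w (i - 1) / Real.sqrt 2) = 0 := by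
      intro i h
      have h2 := congrFun heq (⟨i, h⟩, 0)
      simp only [Pi.add_apply, Pi.smul_apply, smul_eq_mul, Pi.zero_apply] at h2
      rw [haL ⟨i, h⟩, hbL i h] at h2
      simpa using h2
    have ER : ∀ (i : ℕ) (h : i < n + 1),
        s * (-w i / Real.sqrt 2)
          + t * (if i = n then -w n / Real.sqrt 2 else w (i + 1) / Real.sqrt 2) = 0 := by
      intro i h
      have h2 := congrFun heq (⟨i, h⟩, 1)
      simp only [Pi.add_apply, Pi.smul_apply, smul_eq_mul, Pi.zero_apply] at h2
      rw [haR ⟨i, h⟩, hbR i h] at h2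
      simpa using h2
    have R0 : (s + t) * w 0 = 0 := by
      have h2 := EL 0 (by omega)
      rw [if_pos rfl] at h2
      have h3 : ((s + t) * w 0) / Real.sqrt 2 = 0 := by linear_combination h2
      exact (div_eq_zero_iff.mp h3).resolve_right hs2'
    have R1 : ∀ i, i < n → s * w (i + 1) = t * w i := by
      intro i hi
      have h2 := EL (i + 1) (by omega)
      rw [if_neg (by omega : ¬ i + 1 = 0)] at h2
      simp only [Nat.add_sub_cancel] at h2
      have h3 : (s * w (i + 1) - t * w i) / Real.sqrt 2 = 0 := by linear_combination h2
      have h4 := (div_eq_zero_iff.mp h3).resolve_right hs2'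
      linarith
    have R2 : ∀ i, i < n → t * w (i + 1) = s * w i := by
      intro i hi
      have h2 := ER i (by omega)
      rw [if_neg (by omega : ¬ i = n)] at h2
      have h3 : (t * w (i + 1) - s * w i) / Real.sqrt 2 = 0 := by linear_combination h2
      have h4 := (div_eq_zero_iff.mp h3).resolve_right hs2'
      linarith
    obtain ⟨j, hj⟩ := hex
    have hwj : w (j : ℕ) ≠ 0 := by rw [← hw' j]; exact hj
    have hjn : (j : ℕ) ≤ n := Nat.lt_succ_iff.mp j.isLt
    have hsq2 : t ^ 2 * w (j : ℕ) = s ^ 2 * w (j : ℕ) := by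
      rcases Nat.lt_or_ge (j : ℕ) n with hlt | hge
      · linear_combination s * R2 (j : ℕ) hlt - t * R1 (j : ℕ) hlt
      · have hjn' : (j : ℕ) = n := by omega
        rw [hjn']
        have e1 := R2 (n - 1) (by omega)
        have e2 := R1 (n - 1) (by omega)
        rw [show n - 1 + 1 = n from by omega] at e1 e2
        linear_combination t * e1 - s * e2
    have hts : t ^ 2 = s ^ 2 := mul_right_cancel₀ hwj hsq2
    have hfac : (t - s) * (t + s) = 0 := by linear_combination hts
    rcases mul_eq_zero.mp hfac with hcase | hcase
    · exfalso
      have hts' : t = s := by linarith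
      have ht0 : t ≠ 0 := by
        intro h0
        exact hst (by rw [← hts', h0]) h0
      have hw0 : w 0 = 0 := by
        rcases mul_eq_zero.mp R0 with h' | h'
        · exfalso; apply ht0; linarith
        · exact h'
      have hall : ∀ i, i ≤ n → w i = 0 := by
        intro i
        induction i with
        | zero => intro _; exact hw0
        | succ k ih =>
          intro hk
          have h2 := R2 k (by omega)
          rw [ih (by omega)] at h2
          have h3 : t * w (k + 1) = 0 := by linarith [h2]
          exact (mul_eq_zero.mp h3).resolve_left ht0
      exact hwj (hall (j : ℕ) hjn)
    · have hs' : s = -t := by linarith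
      have ht0 : t ≠ 0 := by
        intro h0
        exact hst (by rw [hs', h0, neg_zero]) h0
      have hstep : ∀ i, i < n → w (i + 1) = - w i := by
        intro i hi
        have h2 := R2 i hi
        rw [hs'] at h2
        have h3 : t * (w (i + 1) + w i) = 0 := by linear_combination h2
        have h4 := (mul_eq_zero.mp h3).resolve_left ht0
        linarith
      have hw0 := hw0ne hstep
      have h1 : w 1 = - w 0 := hstep 0 (by omega)
      have hlw : (lam + 1) * w 0 = 0 := by
        linear_combination (-1 : ℝ) * E0 + (pR 0 / (1 - ν)) * h1 - w 0 * hsumc 0 (by omega)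
      have h5 := (mul_eq_zero.mp hlw).resolve_right hw0
      linarith
  constructor
  · constructor
    · exact hdir
    · intro hlam
      have hba' := hba (stepEig hlam)
      intro hLI
      rw [LinearIndependent.pair_iff] at hLI
      have h2 := hLI 1 (-1) (by rw [hba']; funext p; simp)
      exact one_ne_zero h2.1
  · intro hlam
    have hstep := stepEig hlam
    have hba' := hba hstep
    have hw0 := hw0ne hstep
    have haltv := halt hstep
    refine ⟨?_, hba'⟩
    have hnn : (0:ℝ) < (n : ℝ) + 1 := by positivity
    have hsqv : ∀ x : Fin (n + 1), v x ^ 2 = w 0 ^ 2 := by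
      intro x
      rw [hw' x, haltv (x : ℕ) (Nat.lt_succ_iff.mp x.isLt), mul_pow, ← pow_mul,
        mul_comm (x : ℕ) 2, pow_mul]
      norm_num
    have hsum1 : ((n : ℝ) + 1) * w 0 ^ 2 = 1 := by
      rw [Finset.sum_congr rfl (fun x _ => hsqv x)] at hv
      rw [Finset.sum_const, Finset.card_univ, Fintype.card_fin, nsmul_eq_mul] at hv
      push_cast at hv
      linarith
    have hsqrt : Real.sqrt ((n : ℝ) + 1) * Real.sqrt ((n : ℝ) + 1) = (n : ℝ) + 1 :=
      Real.mul_self_sqrt (le_of_lt hnn)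
    have hsne : Real.sqrt ((n : ℝ) + 1) ≠ 0 := by positivity
    have hfac : (w 0 - 1 / Real.sqrt ((n : ℝ) + 1)) * (w 0 + 1 / Real.sqrt ((n : ℝ) + 1)) = 0 := by
      have h2 : w 0 ^ 2 - 1 / ((n : ℝ) + 1) = 0 := by
        rw [sub_eq_zero, eq_div_iff (ne_of_gt hnn)]
        linear_combination hsum1
      calc (w 0 - 1 / Real.sqrt ((n : ℝ) + 1)) * (w 0 + 1 / Real.sqrt ((n : ℝ) + 1))
          = w 0 ^ 2 - (1 / Real.sqrt ((n : ℝ) + 1)) * (1 / Real.sqrt ((n : ℝ) + 1)) := by ring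
        _ = w 0 ^ 2 - 1 / (Real.sqrt ((n : ℝ) + 1) * Real.sqrt ((n : ℝ) + 1)) := by
            rw [div_mul_div_comm, one_mul]
        _ = w 0 ^ 2 - 1 / ((n : ℝ) + 1) := by rw [hsqrt]
        _ = 0 := h2
    rcases mul_eq_zero.mp hfac with hc | hc
    · left
      intro x
      have hw0v : w 0 = 1 / Real.sqrt ((n : ℝ) + 1) := by linarith [sub_eq_zero.mp hc]
      rw [hw' x, haltv (x : ℕ) (Nat.lt_succ_iff.mp x.isLt), hw0v]
      ring
    · right
      intro x
      have hw0v : w 0 = -(1 / Real.sqrt ((n : ℝ) + 1)) := by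
        have := hc; linarith [this]
      rw [hw' x, haltv (x : ℕ) (Nat.lt_succ_iff.mp x.isLt), hw0v]
      ring
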